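/- Let R be a p-adically complete commutative ring with endomorphism φ_R, and I ⊆ R a closed φ_R-invariant ideal such that φ_R induces an automorphism of W = R/I and acts topologically nilpotently on I (i.e. nilpotently on I/pI). Then the projection R → W admits a unique ring-theoretic section s : W → R satisfying s ∘ φ_W = φ_R ∘ s. -/
import Mathlib


/-!
STATEMENT 4: Let `R` be a `p`-adically complete commutative ring with endomorphism `φR`,
and `I ⊆ R` a closed `φR`-invariant ideal such that `φR` induces an automorphism of
`W = R/I` and acts topologically nilpotently on `I` (i.e. nilpotently on `I/pI`).
Then the projection `R → W` admits a unique ring-theoretic section `s : W → R`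
satisfying `s ∘ φ_W = φ_R ∘ s`.
-/

theorem unique_frobenius_equivariant_section
    {R : Type*} [CommRing R] (p : ℕ) (hp : p.Prime)
    [IsAdicComplete (Ideal.span {(p : R)}) R]
    (φR : R →+* R) (I : Ideal R)
    -- `I` is closed for the `p`-adic topology
    (hclosed : ∀ x : R, (∀ n : ℕ, x ∈ I ⊔ Ideal.span {(p : R) ^ n}) → x ∈ I)
    -- `I` is `φR`-invariant
    (hinv : ∀ x ∈ I, φR x ∈ I)
    -- the induced endomorphism `φW` of `W = R/I`
    (φW : R ⧸ I →+* R ⧸ I)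
    (hφW : φW.comp (Ideal.Quotient.mk I) = (Ideal.Quotient.mk I).comp φR)
    -- `φW` is an automorphism
    (hbij : Function.Bijective φW)
    -- `φR` is nilpotent on `I / pI`
    (hnilp : ∃ n : ℕ, ∀ x ∈ I, (⇑φR)^[n] x ∈ Ideal.span {(p : R)} * I) :
    ∃! s : R ⧸ I →+* R,
      (Ideal.Quotient.mk I).comp s = RingHom.id (R ⧸ I) ∧
        s.comp φW = φR.comp s := by
  classical
  obtain ⟨n, hn⟩ := hnilp
  -- basic ring-hom-iterate facts
  have hφm : ∀ (m : ℕ) (a b : R), (⇑φR)^[m] (a * b) = (⇑φR)^[m] a * (⇑φR)^[m] b := by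
    intro m a b; simp only [← RingHom.coe_pow]; exact map_mul _ _ _
  have hφa : ∀ (m : ℕ) (a b : R), (⇑φR)^[m] (a + b) = (⇑φR)^[m] a + (⇑φR)^[m] b := by
    intro m a b; simp only [← RingHom.coe_pow]; exact map_add _ _ _
  have hφs : ∀ (m : ℕ) (a b : R), (⇑φR)^[m] (a - b) = (⇑φR)^[m] a - (⇑φR)^[m] b := by
    intro m a b; simp only [← RingHom.coe_pow]; exact map_sub _ _ _
  have hφone : ∀ m : ℕ, (⇑φR)^[m] (1 : R) = 1 := by
    intro m; simp only [← RingHom.coe_pow]; exact map_one _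
  have hφp : ∀ m : ℕ, (⇑φR)^[m] ((p : R)) = (p : R) := by
    intro m; simp only [← RingHom.coe_pow]; exact map_natCast _ p
  -- the automorphism of the quotient
  let E : (R ⧸ I) ≃+* (R ⧸ I) := RingEquiv.ofBijective φW hbij
  have hcoeE : ⇑E = ⇑φW := rfl
  have hmkφ : ∀ x : R, φW (Ideal.Quotient.mk I x) = Ideal.Quotient.mk I (φR x) :=
    fun x => RingHom.congr_fun hφW x
  have hmkφn : ∀ (m : ℕ) (x : R),
      Ideal.Quotient.mk I ((⇑φR)^[m] x) = (⇑φW)^[m] (Ideal.Quotient.mk I x) := by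
    intro m
    induction m with
    | zero => intro x; simp
    | succ m ih =>
      intro x
      simp only [Function.iterate_succ_apply]
      rw [ih (φR x), ← hmkφ]
  have hsurj : Function.Surjective (Ideal.Quotient.mk I) := Ideal.Quotient.mk_surjective
  let lf : R ⧸ I → R := Function.surjInv hsurj
  have hlf : ∀ w, Ideal.Quotient.mk I (lf w) = w := Function.surjInv_eq hsurj
  -- iterates of the inverse automorphism, as ring homs
  have hvex : ∀ m : ℕ, ∃ g : (R ⧸ I) →+* (R ⧸ I), ⇑g = (⇑E.symm)^[m] := by
    intro m
    induction m with
    | zero => exact ⟨RingHom.id _, by funext x; simp⟩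
    | succ m ih =>
      obtain ⟨g, hg⟩ := ih
      refine ⟨g.comp E.symm.toRingHom, ?_⟩
      funext w
      simp [Function.iterate_succ_apply, hg]
  choose v hv using hvex
  have hES : ∀ (m : ℕ) (w : R ⧸ I), (⇑φW)^[m] ((⇑E.symm)^[m] w) = w := by
    intro m w
    have h := Function.LeftInverse.iterate E.apply_symm_apply m w
    rwa [hcoeE] at h
  have hESr : ∀ (m : ℕ) (w : R ⧸ I), (⇑E.symm)^[m] ((⇑φW)^[m] w) = w := by
    intro m w
    have h := Function.LeftInverse.iterate E.symm_apply_apply m w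
    rwa [hcoeE] at h
  have hcomm : ∀ (m : ℕ) (w : R ⧸ I), (⇑E.symm)^[m] (φW w) = φW ((⇑E.symm)^[m] w) := by
    intro m w
    have hc : Function.Commute ⇑E.symm ⇑E := fun x => by
      rw [E.symm_apply_apply, E.apply_symm_apply]
    have h := hc.iterate_left m w
    rwa [hcoeE] at h
  -- the key nilpotence estimate
  have hkey : ∀ (k : ℕ) (x : R), x ∈ I → (⇑φR)^[n * k] x ∈ Ideal.span {(p : R) ^ k} := by
    intro k
    induction k with
    | zero =>
      intro x hx
      simp [Ideal.span_singleton_one]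
    | succ k ih =>
      intro x hx
      rw [Nat.mul_succ, Function.iterate_add_apply]
      have hx2 : (⇑φR)^[n] x ∈ Ideal.span {(p : R)} * I := hn x hx
      have main : ∀ y ∈ Ideal.span {(p : R)} * I,
          (⇑φR)^[n * k] y ∈ Ideal.span {(p : R) ^ (k + 1)} := by
        intro y hy
        refine Submodule.mul_induction_on hy ?_ ?_
        · intro a ha b hb
          obtain ⟨c, hc⟩ := Ideal.mem_span_singleton'.mp ha
          obtain ⟨d, hd⟩ := Ideal.mem_span_singleton'.mp (ih b hb)
          refine Ideal.mem_span_singleton'.mpr ⟨(⇑φR)^[n * k] c * d, ?_⟩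
          rw [hφm, ← hc, hφm, hφp, ← hd]
          ring
        · intro y z hy hz
          rw [hφa]
          exact add_mem hy hz
      exact main _ hx2
  have hkeyq : ∀ (k : ℕ) (c : R), Ideal.Quotient.mk I c = 0 →
      (⇑φR)^[n * k] c ∈ Ideal.span {(p : R) ^ k} :=
    fun k c hc => hkey k c (Ideal.Quotient.eq_zero_iff_mem.mp hc)
  have hdiff : ∀ (k : ℕ) (a b : R), Ideal.Quotient.mk I a = Ideal.Quotient.mk I b →
      (⇑φR)^[n * k] a - (⇑φR)^[n * k] b ∈ Ideal.span {(p : R) ^ k} := by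
    intro k a b hab
    have := hkeyq k (a - b) (by rw [map_sub, hab, sub_self])
    rwa [hφs] at this
  -- the approximating sequence
  let t : (R ⧸ I) → ℕ → R := fun w k => (⇑φR)^[n * k] (lf (v (n * k) w))
  have hmkt : ∀ w k, Ideal.Quotient.mk I (t w k) = w := by
    intro w k
    show Ideal.Quotient.mk I ((⇑φR)^[n * k] (lf (v (n * k) w))) = w
    rw [hmkφn, hlf, hv]
    exact hES (n * k) w
  have hstep : ∀ (w : R ⧸ I) (k : ℕ), t w (k + 1) - t w k ∈ Ideal.span {(p : R) ^ k} := by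
    intro w k
    show (⇑φR)^[n * (k + 1)] (lf (v (n * (k + 1)) w)) - (⇑φR)^[n * k] (lf (v (n * k) w)) ∈ _
    rw [Nat.mul_succ, Function.iterate_add_apply]
    refine hdiff k _ _ ?_
    rw [hmkφn, hlf, hlf, hv, hv]
    rw [Nat.add_comm, Function.iterate_add_apply]
    exact hES n _
  have hmono : ∀ {a b : ℕ}, a ≤ b →
      Ideal.span {(p : R) ^ b} ≤ Ideal.span {(p : R) ^ a} := by
    intro a b hab
    exact Ideal.span_singleton_le_span_singleton.mpr (pow_dvd_pow _ hab)
  have hcauchy : ∀ (w : R ⧸ I) (m m' : ℕ), m ≤ m' →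
      t w m' - t w m ∈ Ideal.span {(p : R) ^ m} := by
    intro w m m' h
    induction m', h using Nat.le_induction with
    | base => simp
    | succ m' hm ih =>
      have h2 : t w (m' + 1) - t w m = (t w (m' + 1) - t w m') + (t w m' - t w m) := by ring
      rw [h2]
      exact add_mem (hmono hm (hstep w m')) ih
  have hPk : ∀ k : ℕ, (Ideal.span {(p : R)} ^ k • ⊤ : Submodule R R) =
      Ideal.span {(p : R) ^ k} := by
    intro k
    rw [smul_eq_mul, Ideal.mul_top, Ideal.span_singleton_pow]
  -- the limit
  have hex : ∀ w : R ⧸ I, ∃ L, ∀ k,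
      t w k ≡ L [SMOD (Ideal.span {(p : R)} ^ k • ⊤ : Submodule R R)] := by
    intro w
    refine IsPrecomplete.prec IsAdicComplete.toIsPrecomplete ?_
    intro m m' h
    rw [SModEq.sub_mem, hPk]
    have h2 := neg_mem (hcauchy w m m' h)
    rwa [neg_sub] at h2
  choose s0 hs0 using hex
  have hs : ∀ (w : R ⧸ I) (k : ℕ), s0 w - t w k ∈ Ideal.span {(p : R) ^ k} := by
    intro w k
    have h := hs0 w k
    rw [SModEq.sub_mem, hPk] at h
    have h2 := neg_mem h
    rwa [neg_sub] at h2
  have hhaus : ∀ a b : R, (∀ k : ℕ, a - b ∈ Ideal.span {(p : R) ^ k}) → a = b := by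
    intro a b h
    have h0 : a - b = 0 := by
      refine IsHausdorff.haus (IsAdicComplete.toIsHausdorff (I := Ideal.span {(p : R)}) (M := R)) (a - b) ?_
      intro k
      rw [SModEq.zero, hPk]
      exact h k
    exact sub_eq_zero.mp h0
  -- ring hom properties of the limit
  have hone : s0 1 = 1 := by
    apply hhaus; intro k
    have h2 : t 1 k - 1 ∈ Ideal.span {(p : R) ^ k} := by
      have hc := hkeyq k (lf (v (n * k) 1) - 1) (by simp [hlf])
      rw [hφs, hφone] at hc
      exact hc
    have h3 : s0 1 - 1 = (s0 1 - t 1 k) + (t 1 k - 1) := by ring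
    rw [h3]
    exact add_mem (hs 1 k) h2
  have hzero : s0 0 = 0 := by
    apply hhaus; intro k
    have h2 : t 0 k ∈ Ideal.span {(p : R) ^ k} := hkeyq k _ (by simp [hlf])
    have h3 : s0 0 - 0 = (s0 0 - t 0 k) + t 0 k := by ring
    rw [h3]
    exact add_mem (hs 0 k) h2
  have hadd : ∀ w w', s0 (w + w') = s0 w + s0 w' := by
    intro w w'
    apply hhaus; intro k
    have h4 : t (w + w') k - (t w k + t w' k) ∈ Ideal.span {(p : R) ^ k} := by
      have hc := hkeyq k (lf (v (n * k) (w + w')) - (lf (v (n * k) w) + lf (v (n * k) w')))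
        (by simp [hlf])
      rw [hφs, hφa] at hc
      exact hc
    have h5 : s0 (w + w') - (s0 w + s0 w') =
        (s0 (w + w') - t (w + w') k) + (t (w + w') k - (t w k + t w' k))
          - (s0 w - t w k) - (s0 w' - t w' k) := by ring
    rw [h5]
    exact sub_mem (sub_mem (add_mem (hs _ k) h4) (hs w k)) (hs w' k)
  have hmul : ∀ w w', s0 (w * w') = s0 w * s0 w' := by
    intro w w'
    apply hhaus; intro k
    have h4 : t (w * w') k - t w k * t w' k ∈ Ideal.span {(p : R) ^ k} := by
      have hc := hkeyq k (lf (v (n * k) (w * w')) - lf (v (n * k) w) * lf (v (n * k) w'))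
        (by simp [hlf])
      rw [hφs, hφm] at hc
      exact hc
    have e1 : t w k - s0 w ∈ Ideal.span {(p : R) ^ k} := by
      have h := neg_mem (hs w k); rwa [neg_sub] at h
    have e2 : t w' k - s0 w' ∈ Ideal.span {(p : R) ^ k} := by
      have h := neg_mem (hs w' k); rwa [neg_sub] at h
    have h5 : s0 (w * w') - s0 w * s0 w' =
        (s0 (w * w') - t (w * w') k) + (t (w * w') k - t w k * t w' k)
          + t w k * (t w' k - s0 w') + s0 w' * (t w k - s0 w) := by ring
    rw [h5]
    exact add_mem (add_mem (add_mem (hs _ k) h4) (Ideal.mul_mem_left _ _ e2))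
      (Ideal.mul_mem_left _ _ e1)
  -- the section property
  have hsec : ∀ w, Ideal.Quotient.mk I (s0 w) = w := by
    intro w
    have hIm : s0 w - lf w ∈ I := by
      apply hclosed
      intro k
      have h1 : s0 w - t w k ∈ Ideal.span {(p : R) ^ k} := hs w k
      have h2 : t w k - lf w ∈ I := Ideal.Quotient.eq.mp (by rw [hmkt, hlf])
      exact Submodule.mem_sup.mpr ⟨t w k - lf w, h2, s0 w - t w k, h1, by ring⟩
    have h := Ideal.Quotient.eq.mpr hIm
    rw [hlf] at h
    exact h
  -- equivariance
  have hequi : ∀ w, s0 (φW w) = φR (s0 w) := by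
    intro w
    apply hhaus; intro k
    have h2 : φR (s0 w) - φR (t w k) ∈ Ideal.span {(p : R) ^ k} := by
      obtain ⟨d, hd⟩ := Ideal.mem_span_singleton'.mp (hs w k)
      refine Ideal.mem_span_singleton'.mpr ⟨φR d, ?_⟩
      rw [← map_sub, ← hd, map_mul, map_pow, map_natCast]
    have h3 : t (φW w) k - φR (t w k) ∈ Ideal.span {(p : R) ^ k} := by
      have hcm : φR (t w k) = (⇑φR)^[n * k] (φR (lf (v (n * k) w))) := by
        show φR ((⇑φR)^[n * k] (lf (v (n * k) w))) = _
        rw [← Function.iterate_succ_apply' φR, Function.iterate_succ_apply]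
      rw [hcm]
      refine hdiff k (lf (v (n * k) (φW w))) (φR (lf (v (n * k) w))) ?_
      rw [hlf, ← hmkφ, hlf, hv]
      exact hcomm (n * k) w
    have h5 : s0 (φW w) - φR (s0 w) =
        (s0 (φW w) - t (φW w) k) + (t (φW w) k - φR (t w k))
          - (φR (s0 w) - φR (t w k)) := by ring
    rw [h5]
    exact sub_mem (add_mem (hs _ k) h3) h2
  -- assemble
  refine ⟨{ toFun := s0, map_one' := hone, map_mul' := fun a b => hmul a b,
            map_zero' := hzero, map_add' := fun a b => hadd a b }, ⟨?_, ?_⟩, ?_⟩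
  · exact RingHom.ext fun w => hsec w
  · exact RingHom.ext fun w => hequi w
  · rintro s' ⟨h1', h2'⟩
    have hmk' : ∀ w, Ideal.Quotient.mk I (s' w) = w := fun w => RingHom.congr_fun h1' w
    have hφ' : ∀ w, s' (φW w) = φR (s' w) := fun w => RingHom.congr_fun h2' w
    have hit' : ∀ (m : ℕ) (w : R ⧸ I), s' ((⇑φW)^[m] w) = (⇑φR)^[m] (s' w) := by
      intro m
      induction m with
      | zero => intro w; simp
      | succ m ih =>
        intro w
        rw [Function.iterate_succ_apply', Function.iterate_succ_apply', hφ', ih]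
    ext w
    show s' w = s0 w
    apply hhaus; intro k
    obtain ⟨u, hu⟩ : ∃ u, (⇑φW)^[n * k] u = w := ⟨(⇑E.symm)^[n * k] w, hES (n * k) w⟩
    have hu2 : (⇑E.symm)^[n * k] w = u := by rw [← hu]; exact hESr (n * k) u
    have h5 : s' w = (⇑φR)^[n * k] (s' u) := by rw [← hu]; exact hit' (n * k) u
    have h6 : s' w - t w k ∈ Ideal.span {(p : R) ^ k} := by
      rw [h5]
      refine hdiff k (s' u) (lf (v (n * k) w)) ?_
      rw [hmk', hlf, hv, hu2]
    have h7 : s' w - s0 w = (s' w - t w k) - (s0 w - t w k) := by ring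
    rw [h7]
    exact sub_mem h6 (hs w k)
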